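/- arXiv:2602.19776 — 2 statements merged into one kernel-verified Lean document; each statement's English description precedes it below -/
import Mathlib

section
/- The pivot is symmetric in its two vertices: if (u,v) is an edge of the undirected irreflexive graph G, then G ∧ uv = G ∧ vu, i.e., ((G ⋆ u) ⋆ v) ⋆ u = ((G ⋆ v) ⋆ u) ⋆ v. -/
/-- Local complementation of `G` about `u`: edges between distinct neighbours of `u`
are complemented, all other adjacencies preserved. -/
def localComp {V : Type*} (G : SimpleGraph V) (u : V) : SimpleGraph V where
  Adj a b := (G.Adj a b ∧ ¬(G.Adj u a ∧ G.Adj u b ∧ a ≠ b)) ∨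
             (¬ G.Adj a b ∧ (G.Adj u a ∧ G.Adj u b ∧ a ≠ b))
  symm := by
    constructor
    intro a b h
    rcases h with ⟨h1, h2⟩ | ⟨h1, h2, h3, h4⟩
    · exact Or.inl ⟨h1.symm, fun ⟨x, y, z⟩ => h2 ⟨y, x, z.symm⟩⟩
    · exact Or.inr ⟨fun hc => h1 hc.symm, h3, h2, h4.symm⟩
  loopless := by
    constructor
    intro a h
    rcases h with ⟨h1, _⟩ | ⟨_, _, _, h4⟩
    · exact G.irrefl h1
    · exact h4 rfl


/-- Pivot of G about the edge (u,v). -/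
def pivot {V : Type*} (G : SimpleGraph V) (u v : V) : SimpleGraph V :=
  localComp (localComp (localComp G u) v) u

lemma localComp_adj {V : Type*} (G : SimpleGraph V) (u a b : V) :
    (localComp G u).Adj a b ↔ (G.Adj a b ∧ ¬(G.Adj u a ∧ G.Adj u b ∧ a ≠ b)) ∨
      (¬ G.Adj a b ∧ (G.Adj u a ∧ G.Adj u b ∧ a ≠ b)) := Iff.rfl

set_option maxHeartbeats 4000000 in
/-- The pivot is symmetric in its two vertices. -/
theorem pivot_symm {V : Type*} (G : SimpleGraph V) (u v : V) (huv : G.Adj u v) :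
    pivot G u v = pivot G v u := by
  have hne : u ≠ v := huv.ne
  have hvu : G.Adj v u := huv.symm
  ext a b
  simp only [pivot, localComp_adj]
  by_cases hab : a = b <;> by_cases hau : a = u <;> by_cases hav : a = v <;>
    by_cases hbu : b = u <;> by_cases hbv : b = v <;>
    by_cases h1 : G.Adj a b <;> by_cases h2 : G.Adj u a <;> by_cases h3 : G.Adj u b <;>
    by_cases h4 : G.Adj v a <;> by_cases h5 : G.Adj v b <;>
    simp_all [eq_comm]
end

section
/- Let G be an undirected irreflexive graph with edge (u,v), and set A := N_G(u) ∩ N_G(v), B := (N_G(u) \ N_G(v)) \ {v}, C := (N_G(v) \ N_G(u)) \ {u}. Then for vertices a, b lying in two distinct sets among A, B, C, (a,b) is an edge of G ∧ uv if and only if (a,b) is not an edge of G. -/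
lemma pivot_AB {V : Type*} (G : SimpleGraph V) {u v a b : V}
    (huv : G.Adj u v) (hua : G.Adj u a) (hva : G.Adj v a)
    (hub : G.Adj u b) (hvb : ¬ G.Adj v b) (hbv : b ≠ v) :
    (pivot G u v).Adj a b ↔ ¬ G.Adj a b := by
  have hvu := huv.symm
  have euv : u ≠ v := huv.ne
  have eau : a ≠ u := fun h => G.loopless.irrefl u (h ▸ hua)
  have eav : a ≠ v := fun h => G.loopless.irrefl v (h ▸ hva)
  have ebu : b ≠ u := fun h => G.loopless.irrefl u (h ▸ hub)
  have eab : a ≠ b := fun h => hvb (h ▸ hva)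
  simp_all [pivot, localComp, euv.symm, eau.symm, eav.symm, ebu.symm, hbv.symm, eab.symm]

lemma pivot_AC {V : Type*} (G : SimpleGraph V) {u v a b : V}
    (huv : G.Adj u v) (hua : G.Adj u a) (hva : G.Adj v a)
    (hub : ¬ G.Adj u b) (hvb : G.Adj v b) (hbu : b ≠ u) :
    (pivot G u v).Adj a b ↔ ¬ G.Adj a b := by
  have hvu := huv.symm
  have euv : u ≠ v := huv.ne
  have eau : a ≠ u := fun h => G.loopless.irrefl u (h ▸ hua)
  have eav : a ≠ v := fun h => G.loopless.irrefl v (h ▸ hva)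
  have ebv : b ≠ v := fun h => G.loopless.irrefl v (h ▸ hvb)
  have eab : a ≠ b := fun h => hub (h ▸ hua)
  simp_all [pivot, localComp, euv.symm, eau.symm, eav.symm, hbu.symm, ebv.symm, eab.symm]

lemma pivot_BC {V : Type*} (G : SimpleGraph V) {u v a b : V}
    (huv : G.Adj u v) (hua : G.Adj u a) (hva : ¬ G.Adj v a) (hav : a ≠ v)
    (hub : ¬ G.Adj u b) (hvb : G.Adj v b) (hbu : b ≠ u) :
    (pivot G u v).Adj a b ↔ ¬ G.Adj a b := by
  have hvu := huv.symm
  have euv : u ≠ v := huv.ne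
  have eau : a ≠ u := fun h => G.loopless.irrefl u (h ▸ hua)
  have ebv : b ≠ v := fun h => G.loopless.irrefl v (h ▸ hvb)
  have eab : a ≠ b := fun h => hub (h ▸ hua)
  simp_all [pivot, localComp, euv.symm, eau.symm, hav.symm, hbu.symm, ebv.symm, eab.symm]

/-- Edges between any two of the three sets A, B, C are complemented by the pivot. -/
theorem pivot_complement_between {V : Type*} (G : SimpleGraph V) (u v : V)
    (huv : G.Adj u v)
    (A B C : Set V)
    (hA : A = G.neighborSet u ∩ G.neighborSet v)
    (hB : B = (G.neighborSet u \ G.neighborSet v) \ {v})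
    (hC : C = (G.neighborSet v \ G.neighborSet u) \ {u}) :
    ∀ S ∈ ({A, B, C} : Set (Set V)), ∀ T ∈ ({A, B, C} : Set (Set V)), S ≠ T →
      ∀ a ∈ S, ∀ b ∈ T, ((pivot G u v).Adj a b ↔ ¬ G.Adj a b) := by
  subst hA hB hC
  intro S hS T hT hST a ha b hb
  simp only [Set.mem_insert_iff, Set.mem_singleton_iff] at hS hT
  rcases hS with rfl | rfl | rfl <;> rcases hT with rfl | rfl | rfl
  · exact absurd rfl hST
  · exact pivot_AB G huv ha.1 ha.2 hb.1.1 hb.1.2 hb.2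
  · exact pivot_AC G huv ha.1 ha.2 hb.1.2 hb.1.1 hb.2
  · rw [(pivot G u v).adj_comm, G.adj_comm]
    exact pivot_AB G huv hb.1 hb.2 ha.1.1 ha.1.2 ha.2
  · exact absurd rfl hST
  · exact pivot_BC G huv ha.1.1 ha.1.2 ha.2 hb.1.2 hb.1.1 hb.2
  · rw [(pivot G u v).adj_comm, G.adj_comm]
    exact pivot_AC G huv hb.1 hb.2 ha.1.2 ha.1.1 ha.2
  · rw [(pivot G u v).adj_comm, G.adj_comm]
    exact pivot_BC G huv hb.1.1 hb.1.2 hb.2 ha.1.2 ha.1.1 ha.2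
  · exact absurd rfl hST
end
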